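/- Let G be a finite thin 2-qBMG with color classes U and W, and let U₁ ⊆ U and W₁ ⊆ W be orbits of Aut(G). Let G₁ be the subdigraph of G induced on U₁ ∪ W₁, and suppose there exist x₁ ∈ U₁ and y₁ ∈ W₁ with x₁y₁ ∈ E. Then one of the following holds: (i) G₁ is a disjoint union of directed stars with centers in U₁: no edge of G₁ has its tail in W₁, every vertex of W₁ has exactly one in-neighbor within G₁, distinct vertices of U₁ have disjoint out-neighborhoods in G₁, every vertex of U₁ has the same out-degree d in G₁, and d·|U₁| = |W₁| (in particular, if |U₁| = |W₁| then G₁ consists of |U₁| pairwise vertex-disjoint edges directed from U₁ to W₁); or (ii) the edge set of G₁ is a union of pairwise vertex-disjoint symmetric edges forming a perfect matching between U₁ and W₁, i.e., every vertex of U₁ ∪ W₁ lies on exactly one symmetric edge of G₁ and G₁ has no other edges. -/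
import Mathlib


/-- Two vertices are equivalent (`x ∼̇ y`) if they have the same
out-neighbors and the same in-neighbors. -/
def dotSim {V : Type*} (E : V → V → Prop) (x y : V) : Prop :=
  (∀ z, E x z ↔ E y z) ∧ (∀ z, E z x ↔ E z y)

/-- `U` and `W` are the color classes of a 2-colored digraph with edge relation `E`:
they partition the vertex set and every edge has one endpoint in each class. -/
def IsTwoColored {V : Type*} (E : V → V → Prop) (U W : Set V) : Prop :=
  (∀ v, v ∈ U ∨ v ∈ W) ∧ (∀ v, ¬(v ∈ U ∧ v ∈ W)) ∧
    ∀ u v, E u v → (u ∈ U ∧ v ∈ W) ∨ (u ∈ W ∧ v ∈ U)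

/-- Axiom (N1). -/
def AxN1 {V : Type*} (E : V → V → Prop) : Prop :=
  ∀ u v, u ≠ v → ¬E u v → ¬E v u → ∀ w t, ¬(E u t ∧ E v w ∧ E t w)

/-- Axiom (N2): bi-transitivity. -/
def AxN2 {V : Type*} (E : V → V → Prop) : Prop :=
  ∀ u v w t, E u v → E v w → E w t → E u t

/-- Axiom (N3). -/
def AxN3 {V : Type*} (E : V → V → Prop) : Prop :=
  ∀ u v w, E u w → E v w → (∀ z, E u z → E v z) ∨ (∀ z, E v z → E u z)

/-- A 2-qBMG: an irreflexive 2-colored digraph satisfying (N1), (N2), (N3). -/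
def IsQBMG {V : Type*} (E : V → V → Prop) (U W : Set V) : Prop :=
  (∀ v, ¬E v v) ∧ IsTwoColored E U W ∧ AxN1 E ∧ AxN2 E ∧ AxN3 E

/-- An automorphism of the digraph: a permutation mapping edges to edges. -/
def IsAut {V : Type*} (E : V → V → Prop) (π : Equiv.Perm V) : Prop :=
  ∀ u v, E u v → E (π u) (π v)

/-- A color-preserving automorphism of the 2-colored digraph. -/
def IsAutI {V : Type*} (E : V → V → Prop) (U W : Set V) (π : Equiv.Perm V) : Prop :=
  IsAut E π ∧ (∀ v ∈ U, π v ∈ U) ∧ (∀ v ∈ W, π v ∈ W)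

/-- `O` is an orbit of `Aut(G)` on the vertex set. -/
def IsAutOrbit {V : Type*} (E : V → V → Prop) (O : Set V) : Prop :=
  O.Nonempty ∧ ∀ x ∈ O, ∀ y, (y ∈ O ↔ ∃ g : Equiv.Perm V, IsAut E g ∧ g x = y)

set_option linter.unusedSectionVars false

section
variable {V : Type*} [Fintype V] [DecidableEq V] {E : V → V → Prop}

lemma autPow {g : Equiv.Perm V} (hg : IsAut E g) : ∀ n, IsAut E (g ^ n)
  | 0 => by intro u v h; simpa using h
  | n+1 => by
      intro u v h
      have h2 := autPow hg n _ _ (hg u v h)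
      simpa [pow_succ, Equiv.Perm.mul_apply] using h2

lemma autRev {g : Equiv.Perm V} (hg : IsAut E g) {u v : V} (h : E (g u) (g v)) : E u v := by
  have hpos : 0 < orderOf g := orderOf_pos g
  have h1 := autPow hg (orderOf g - 1) (g u) (g v) h
  have h2 : ∀ w : V, (g ^ (orderOf g - 1)) (g w) = w := by
    intro w
    have hone : (g ^ (orderOf g - 1)) * g = 1 := by
      rw [← pow_succ, Nat.sub_add_cancel hpos, pow_orderOf_eq_one]
    calc (g ^ (orderOf g - 1)) (g w) = ((g ^ (orderOf g - 1)) * g) w := rfl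
    _ = w := by rw [hone]; rfl
  rwa [h2, h2] at h1

lemma autInv {g : Equiv.Perm V} (hg : IsAut E g) : IsAut E g⁻¹ := by
  intro u v h
  apply autRev hg
  simpa using h

lemma orbit_apply {O : Set V} (hO : IsAutOrbit E O) {x} (hx : x ∈ O) {g} (hg : IsAut E g) :
    g x ∈ O :=
  (hO.2 x hx (g x)).mpr ⟨g, hg, rfl⟩

lemma orbit_trans {O : Set V} (hO : IsAutOrbit E O) {x y} (hx : x ∈ O) (hy : y ∈ O) :
    ∃ g : Equiv.Perm V, IsAut E g ∧ g x = y :=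
  (hO.2 x hx y).mp hy

lemma img_out {g : Equiv.Perm V} (hg : IsAut E g) (x : V) :
    g '' {z | E x z} = {z | E (g x) z} := by
  ext w
  constructor
  · rintro ⟨z, hz, rfl⟩; exact hg _ _ hz
  · intro hw
    refine ⟨g⁻¹ w, ?_, by simp⟩
    apply autRev hg
    simpa using hw

lemma img_in {g : Equiv.Perm V} (hg : IsAut E g) (x : V) :
    g '' {z | E z x} = {z | E z (g x)} := by
  ext w
  constructor
  · rintro ⟨z, hz, rfl⟩; exact hg _ _ hz
  · intro hw
    refine ⟨g⁻¹ w, ?_, by simp⟩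
    apply autRev hg
    simpa using hw

lemma img_outS {g : Equiv.Perm V} (hg : IsAut E g) {S : Set V}
    (hS : ∀ v ∈ S, g v ∈ S) (hS' : ∀ v ∈ S, g⁻¹ v ∈ S) (x : V) :
    g '' {z | z ∈ S ∧ E x z} = {z | z ∈ S ∧ E (g x) z} := by
  ext w
  constructor
  · rintro ⟨z, ⟨hzS, hz⟩, rfl⟩; exact ⟨hS z hzS, hg _ _ hz⟩
  · rintro ⟨hwS, hw⟩
    refine ⟨g⁻¹ w, ⟨hS' w hwS, ?_⟩, by simp⟩
    apply autRev hg
    simpa using hw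

lemma qbmg_swap {U W : Set V} (h : IsQBMG E U W) : IsQBMG E W U := by
  obtain ⟨h1, ⟨c1, c2, c3⟩, h3, h4, h5⟩ := h
  exact ⟨h1, ⟨fun v => (c1 v).symm, fun v hv => c2 v ⟨hv.2, hv.1⟩,
    fun u v huv => (c3 u v huv).symm⟩, h3, h4, h5⟩

/-- Key lemma: two vertices of the same orbit inside a color class having a common
out-neighbor must coincide. -/
lemma lemmaL1 {U W O : Set V} (hG : IsQBMG E U W)
    (hthin : ∀ x y, dotSim E x y → x = y)
    (hOsub : O ⊆ U) (hOrb : IsAutOrbit E O)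
    {x x' y : V} (hx : x ∈ O) (hx' : x' ∈ O) (h1 : E x y) (h2 : E x' y) : x = x' := by
  obtain ⟨hirr, hcol, hN1, hN2, hN3⟩ := hG
  obtain ⟨g, hg, hgx⟩ := orbit_trans hOrb hx hx'
  have hcardout : {z | E x z}.ncard = {z | E x' z}.ncard := by
    rw [← hgx, ← img_out hg x, Set.ncard_image_of_injective _ g.injective]
  have hcardin : {z | E z x}.ncard = {z | E z x'}.ncard := by
    rw [← hgx, ← img_in hg x, Set.ncard_image_of_injective _ g.injective]
  have hNp : ∀ z, E x z ↔ E x' z := by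
    have hset : {z | E x z} = {z | E x' z} := by
      rcases hN3 x x' y h1 h2 with h | h
      · exact Set.eq_of_subset_of_ncard_le (fun z hz => h z hz) hcardout.ge
      · exact (Set.eq_of_subset_of_ncard_le (fun z hz => h z hz) hcardout.le).symm
    exact fun z => Set.ext_iff.mp hset z
  have hxU : x ∈ U := hOsub hx
  have hx'U : x' ∈ U := hOsub hx'
  have hWz : ∀ z x₀, x₀ ∈ U → E z x₀ → z ∈ W := by
    intro z x₀ hx₀ hz
    rcases hcol.2.2 z x₀ hz with ⟨_, hxW⟩ | ⟨hzW, _⟩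
    · exact absurd ⟨hx₀, hxW⟩ (hcol.2.1 x₀)
    · exact hzW
  have key : ∀ z, E z x → ¬E z x' → E x' z := by
    intro z hzx hnz
    by_contra hxz
    have hzW : z ∈ W := hWz z x hxU hzx
    have hne : z ≠ x' := fun h => hcol.2.1 x' ⟨hx'U, h ▸ hzW⟩
    exact hN1 z x' hne hnz hxz y x ⟨hzx, h2, h1⟩
  have key' : ∀ z, E z x' → ¬E z x → E x z := by
    intro z hzx hnz
    by_contra hxz
    have hzW : z ∈ W := hWz z x' hx'U hzx
    have hne : z ≠ x := fun h => hcol.2.1 x ⟨hxU, h ▸ hzW⟩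
    exact hN1 z x hne hnz hxz y x' ⟨hzx, h1, h2⟩
  have hsub : {z | E z x} ⊆ {z | E z x'} ∨ {z | E z x'} ⊆ {z | E z x} := by
    by_contra hc
    push_neg at hc
    obtain ⟨z, hz, hnz⟩ := Set.not_subset.mp hc.1
    obtain ⟨z', hz', hnz'⟩ := Set.not_subset.mp hc.2
    have hxz' : E x z' := key' z' hz' hnz'
    exact hnz (hN2 z x z' x' hz hxz' hz')
  have hNm : ∀ z, E z x ↔ E z x' := by
    have hset : {z | E z x} = {z | E z x'} := by
      rcases hsub with h | h
      · exact Set.eq_of_subset_of_ncard_le h hcardin.ge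
      · exact (Set.eq_of_subset_of_ncard_le h hcardin.le).symm
    exact fun z => Set.ext_iff.mp hset z
  exact hthin x x' ⟨hNp, hNm⟩

end


/-- Let `G` be a finite thin 2-qBMG with color classes `U`, `W`, let
`U₁ ⊆ U` and `W₁ ⊆ W` be orbits of `Aut(G)`, and let `G₁` be the subdigraph induced on
`U₁ ∪ W₁`.  If some `x₁ ∈ U₁`, `y₁ ∈ W₁` satisfy `x₁y₁ ∈ E`, then either
(i) `G₁` is a disjoint union of directed stars with centers in `U₁`: there is no edge of
`G₁` with tail in `W₁`, every vertex of `W₁` has exactly one in-neighbor in `G₁`,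
distinct vertices of `U₁` have disjoint out-neighborhoods in `G₁`, all vertices of `U₁`
have the same out-degree `d` in `G₁` with `d·|U₁| = |W₁|` (and if `|U₁| = |W₁|` then
`G₁` consists of pairwise disjoint edges directed from `U₁` to `W₁`); or
(ii) the edges of `G₁` form a perfect matching of symmetric edges between `U₁` and `W₁`. -/
theorem stmt_11 {V : Type*} [Fintype V] [DecidableEq V] (E : V → V → Prop)
    (U W U₁ W₁ : Set V) (hG : IsQBMG E U W) (hthin : ∀ x y, dotSim E x y → x = y)
    (hU₁ : U₁ ⊆ U) (hW₁ : W₁ ⊆ W)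
    (hOrbU : IsAutOrbit E U₁) (hOrbW : IsAutOrbit E W₁)
    (x₁ : V) (hx₁ : x₁ ∈ U₁) (y₁ : V) (hy₁ : y₁ ∈ W₁) (hedge : E x₁ y₁) :
    ((∀ y ∈ W₁, ∀ x ∈ U₁, ¬E y x) ∧
     (∀ y ∈ W₁, ∃! x, x ∈ U₁ ∧ E x y) ∧
     (∀ x ∈ U₁, ∀ x' ∈ U₁, x ≠ x' → ∀ y ∈ W₁, ¬(E x y ∧ E x' y)) ∧
     (∃ d : ℕ, (∀ x ∈ U₁, {y ∈ W₁ | E x y}.ncard = d) ∧ d * U₁.ncard = W₁.ncard) ∧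
     (U₁.ncard = W₁.ncard → ∀ x ∈ U₁, ∃! y, y ∈ W₁ ∧ E x y)) ∨
    ((∀ x ∈ U₁, ∀ y ∈ W₁, (E x y ↔ E y x)) ∧
     (∀ x ∈ U₁, ∃! y, y ∈ W₁ ∧ E x y) ∧
     (∀ y ∈ W₁, ∃! x, x ∈ U₁ ∧ E x y)) := by
  classical
  have hN2 := hG.2.2.2.1
  have L1U : ∀ x ∈ U₁, ∀ x' ∈ U₁, ∀ y, E x y → E x' y → x = x' :=
    fun x hx x' hx' y h1 h2 => lemmaL1 hG hthin hU₁ hOrbU hx hx' h1 h2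
  have L1W : ∀ y ∈ W₁, ∀ y' ∈ W₁, ∀ x, E y x → E y' x → y = y' :=
    fun y hy y' hy' x h1 h2 => lemmaL1 (qbmg_swap hG) hthin hW₁ hOrbW hy hy' h1 h2
  have exEdge : ∀ x ∈ U₁, ∃ y ∈ W₁, E x y := by
    intro x hx
    obtain ⟨g, hg, hgx⟩ := orbit_trans hOrbU hx₁ hx
    exact ⟨g y₁, orbit_apply hOrbW hy₁ hg, hgx ▸ hg x₁ y₁ hedge⟩
  have exEdge' : ∀ y ∈ W₁, ∃ x ∈ U₁, E x y := by
    intro y hy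
    obtain ⟨g, hg, hgy⟩ := orbit_trans hOrbW hy₁ hy
    exact ⟨g x₁, orbit_apply hOrbU hx₁ hg, hgy ▸ hg x₁ y₁ hedge⟩
  by_cases hback : ∃ y ∈ W₁, ∃ x ∈ U₁, E y x
  · right
    obtain ⟨y₀, hy₀, x₀, hx₀, hba⟩ := hback
    -- construct a symmetric edge at (x₀, y₀)
    obtain ⟨g, hg, hgx⟩ := orbit_trans hOrbU hx₁ hx₀
    have hy₃ : g y₁ ∈ W₁ := orbit_apply hOrbW hy₁ hg
    have h03 : E x₀ (g y₁) := hgx ▸ hg x₁ y₁ hedge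
    obtain ⟨h, hh, hhy⟩ := orbit_trans hOrbW hy₁ hy₀
    have hx₂ : h x₁ ∈ U₁ := orbit_apply hOrbU hx₁ hh
    have h20 : E (h x₁) y₀ := hhy ▸ hh x₁ y₁ hedge
    have h23 : E (h x₁) (g y₁) := hN2 _ y₀ x₀ _ h20 hba h03
    have heq : h x₁ = x₀ := L1U _ hx₂ _ hx₀ (g y₁) h23 h03
    have hsym0 : E x₀ y₀ := heq ▸ h20
    have partnerU : ∀ x ∈ U₁, ∃ y ∈ W₁, E x y ∧ E y x := by
      intro x hx
      obtain ⟨k, hk, hkx⟩ := orbit_trans hOrbU hx₀ hx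
      exact ⟨k y₀, orbit_apply hOrbW hy₀ hk, hkx ▸ hk _ _ hsym0, hkx ▸ hk _ _ hba⟩
    have partnerW : ∀ y ∈ W₁, ∃ x ∈ U₁, E x y ∧ E y x := by
      intro y hy
      obtain ⟨k, hk, hky⟩ := orbit_trans hOrbW hy₀ hy
      exact ⟨k x₀, orbit_apply hOrbU hx₀ hk, hky ▸ hk _ _ hsym0, hky ▸ hk _ _ hba⟩
    have symm1 : ∀ x ∈ U₁, ∀ y ∈ W₁, E x y → E y x := by
      intro x hx y hy hxy
      obtain ⟨c, hc, hcy, hyc⟩ := partnerW y hy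
      exact (L1U x hx c hc y hxy hcy) ▸ hyc
    have symm2 : ∀ x ∈ U₁, ∀ y ∈ W₁, E y x → E x y := by
      intro x hx y hy hyx
      obtain ⟨d, hd, hxd, hdx⟩ := partnerU x hx
      exact (L1W y hy d hd x hyx hdx) ▸ hxd
    refine ⟨fun x hx y hy => ⟨symm1 x hx y hy, symm2 x hx y hy⟩, ?_, ?_⟩
    · intro x hx
      obtain ⟨y, hy, hxy, _⟩ := partnerU x hx
      refine ⟨y, ⟨hy, hxy⟩, ?_⟩
      rintro y' ⟨hy', hxy'⟩
      exact L1W y' hy' y hy x (symm1 x hx y' hy' hxy') (symm1 x hx y hy hxy)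
    · intro y hy
      obtain ⟨x, hx, hxy⟩ := exEdge' y hy
      refine ⟨x, ⟨hx, hxy⟩, ?_⟩
      rintro x' ⟨hx', hxy'⟩
      exact L1U x' hx' x hx y hxy' hxy
  · left
    push_neg at hback
    -- degree transport
    have cardW : ∀ x ∈ U₁, ∀ x' ∈ U₁,
        {y | y ∈ W₁ ∧ E x y}.ncard = {y | y ∈ W₁ ∧ E x' y}.ncard := by
      intro x hx x' hx'
      obtain ⟨g, hg, hgx⟩ := orbit_trans hOrbU hx hx'
      rw [← hgx, ← img_outS hg (fun v hv => orbit_apply hOrbW hv hg)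
        (fun v hv => orbit_apply hOrbW hv (autInv hg)) x,
        Set.ncard_image_of_injective _ g.injective]
    -- counting
    set d := {y | y ∈ W₁ ∧ E x₁ y}.ncard with hdd
    have hconst : ∀ x ∈ U₁, {y | y ∈ W₁ ∧ E x y}.ncard = d :=
      fun x hx => cardW x hx x₁ hx₁
    have hprod : d * U₁.ncard = W₁.ncard := by
      have hUf := U₁.toFinite
      have hWf := W₁.toFinite
      set t : V → Finset V := fun x => ({y | y ∈ W₁ ∧ E x y}.toFinite).toFinset with ht
      have hmem : ∀ x y, y ∈ t x ↔ y ∈ W₁ ∧ E x y := fun x y => Set.Finite.mem_toFinset _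
      have hdisj : ∀ x ∈ hUf.toFinset, ∀ x' ∈ hUf.toFinset, x ≠ x' → Disjoint (t x) (t x') := by
        intro x hx x' hx' hne
        rw [Finset.disjoint_left]
        intro y hy hy'
        exact hne (L1U x (hUf.mem_toFinset.mp hx) x' (hUf.mem_toFinset.mp hx') y
          ((hmem x y).mp hy).2 ((hmem x' y).mp hy').2)
      have hcover : hUf.toFinset.biUnion t = hWf.toFinset := by
        ext y
        simp only [Finset.mem_biUnion, Set.Finite.mem_toFinset]
        constructor
        · rintro ⟨x, hx, hy⟩
          exact ((hmem x y).mp hy).1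
        · intro hy
          obtain ⟨x, hx, hxy⟩ := exEdge' y hy
          exact ⟨x, hx, (hmem x y).mpr ⟨hy, hxy⟩⟩
      have hcard := Finset.card_biUnion hdisj
      rw [hcover] at hcard
      have hsum : ∑ x ∈ hUf.toFinset, (t x).card = hUf.toFinset.card * d := by
        have hc : ∀ x ∈ hUf.toFinset, (t x).card = d := fun x hx =>
          (Set.ncard_eq_toFinset_card _ ({y | y ∈ W₁ ∧ E x y}.toFinite)).symm.trans
            (hconst x (hUf.mem_toFinset.mp hx))
        rw [Finset.sum_congr rfl hc, Finset.sum_const, smul_eq_mul]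
      rw [hsum] at hcard
      rw [Set.ncard_eq_toFinset_card _ hUf, Set.ncard_eq_toFinset_card _ hWf, hcard,
        Nat.mul_comm]
    refine ⟨hback, ?_, ?_, ⟨d, hconst, hprod⟩, ?_⟩
    · intro y hy
      obtain ⟨x, hx, hxy⟩ := exEdge' y hy
      refine ⟨x, ⟨hx, hxy⟩, ?_⟩
      rintro x' ⟨hx', hxy'⟩
      exact L1U x' hx' x hx y hxy' hxy
    · rintro x hx x' hx' hne y _ ⟨h1, h2⟩
      exact hne (L1U x hx x' hx' y h1 h2)
    · intro hUW x hx
      have hU₁pos : 0 < U₁.ncard := (Set.ncard_pos).mpr hOrbU.1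
      have hd1 : d = 1 := by
        have : d * U₁.ncard = 1 * U₁.ncard := by rw [one_mul, hprod, hUW]
        exact Nat.eq_of_mul_eq_mul_right hU₁pos this
      have hone : {y | y ∈ W₁ ∧ E x y}.ncard = 1 := by rw [hconst x hx, hd1]
      obtain ⟨a, ha⟩ := Set.ncard_eq_one.mp hone
      have hamem : a ∈ {y | y ∈ W₁ ∧ E x y} := ha ▸ rfl
      refine ⟨a, hamem, ?_⟩
      intro y' hy'
      have : y' ∈ ({a} : Set V) := ha ▸ hy'
      exact this
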